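/- Let n ≥ 2, τ, o ∈ ℝⁿ, d_c > 0 with ‖o - τ‖ > 2·d_c, ε > 1/d_c, and define B(x) = ‖x - τ‖² / (‖x - o‖ - d_c + 1/ε). Let r > 0 and let D ⊆ ℝⁿ be a compact set with τ ∈ D, D ⊆ {x : ‖x - o‖ > d_c}, and D disjoint from the set {x : there exists θ ≥ 1 with ‖x - (τ + θ·(o - τ))‖ < r}. Then there exists c > 0 such that ‖∇B(x)‖ ≥ c·‖x - τ‖ for all x ∈ D. -/

import Mathlib

open scoped RealInnerProductSpace

section Aux
variable {E : Type*} [NormedAddCommGroup E] [InnerProductSpace ℝ E] [CompleteSpace E]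

lemma gradAux (τ o : E) (k : ℝ) (x : E) (hxo : x ≠ o) (hg : ‖x - o‖ + k ≠ 0) :
    HasGradientAt (fun y => ‖y - τ‖ ^ 2 / (‖y - o‖ + k))
      (((‖x - o‖ + k) ^ 2)⁻¹ •
        ((2 * (‖x - o‖ + k)) • (x - τ) - (‖x - τ‖ ^ 2 / ‖x - o‖) • (x - o))) x := by
  have hno : ‖x - o‖ ≠ 0 := by simpa [sub_eq_zero] using hxo
  have hido : HasFDerivAt (fun y : E => y - o) (ContinuousLinearMap.id ℝ E) x :=
    (hasFDerivAt_id x).sub_const o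
  have hidτ : HasFDerivAt (fun y : E => y - τ) (ContinuousLinearMap.id ℝ E) x :=
    (hasFDerivAt_id x).sub_const τ
  have hqo : HasFDerivAt (fun y : E => ⟪y - o, y - o⟫)
      ((fderivInnerCLM ℝ (x - o, x - o)).comp
        ((ContinuousLinearMap.id ℝ E).prod (ContinuousLinearMap.id ℝ E))) x := hido.inner ℝ hido
  have hqτ : HasFDerivAt (fun y : E => ⟪y - τ, y - τ⟫)
      ((fderivInnerCLM ℝ (x - τ, x - τ)).comp
        ((ContinuousLinearMap.id ℝ E).prod (ContinuousLinearMap.id ℝ E))) x := hidτ.inner ℝ hidτ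
  have hne : ⟪x - o, x - o⟫ ≠ 0 := by
    simp only [real_inner_self_eq_norm_sq]; positivity
  have hsq := hqo.sqrt hne
  have hnorm : HasFDerivAt (fun y : E => ‖y - o‖)
      ((1 / (2 * ‖x - o‖)) • ((fderivInnerCLM ℝ (x - o, x - o)).comp
        ((ContinuousLinearMap.id ℝ E).prod (ContinuousLinearMap.id ℝ E)))) x := by
    have e1 : (fun y : E => ‖y - o‖) = fun y : E => Real.sqrt ⟪y - o, y - o⟫ := by
      funext y; rw [real_inner_self_eq_norm_sq, Real.sqrt_sq (norm_nonneg _)]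
    rw [e1]
    have e2 : Real.sqrt ⟪x - o, x - o⟫ = ‖x - o‖ := by
      rw [real_inner_self_eq_norm_sq, Real.sqrt_sq (norm_nonneg _)]
    rw [← e2]
    exact hsq
  have hgf : HasFDerivAt (fun y : E => ‖y - o‖ + k)
      ((1 / (2 * ‖x - o‖)) • ((fderivInnerCLM ℝ (x - o, x - o)).comp
        ((ContinuousLinearMap.id ℝ E).prod (ContinuousLinearMap.id ℝ E)))) x := hnorm.add_const k
  have hf1 : HasFDerivAt (fun y : E => ‖y - τ‖ ^ 2)
      ((fderivInnerCLM ℝ (x - τ, x - τ)).comp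
        ((ContinuousLinearMap.id ℝ E).prod (ContinuousLinearMap.id ℝ E))) x := by
    have e1 : (fun y : E => ‖y - τ‖ ^ 2) = fun y : E => ⟪y - τ, y - τ⟫ := by
      funext y; rw [real_inner_self_eq_norm_sq]
    rw [e1]; exact hqτ
  have hinv : HasFDerivAt (fun y : E => (‖y - o‖ + k)⁻¹)
      ((-((‖x - o‖ + k) ^ 2)⁻¹) • ((1 / (2 * ‖x - o‖)) • ((fderivInnerCLM ℝ (x - o, x - o)).comp
        ((ContinuousLinearMap.id ℝ E).prod (ContinuousLinearMap.id ℝ E))))) x :=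
    (hasDerivAt_inv hg).comp_hasFDerivAt x hgf
  have hT := hf1.mul hinv
  have hfun : (fun y : E => ‖y - τ‖ ^ 2 / (‖y - o‖ + k)) =
      fun y : E => ‖y - τ‖ ^ 2 * (‖y - o‖ + k)⁻¹ := by
    funext y; simp [div_eq_mul_inv]
  have hEq : (InnerProductSpace.toDual ℝ E)
      (((‖x - o‖ + k) ^ 2)⁻¹ •
        ((2 * (‖x - o‖ + k)) • (x - τ) - (‖x - τ‖ ^ 2 / ‖x - o‖) • (x - o))) =
      ‖x - τ‖ ^ 2 •
        (-((‖x - o‖ + k) ^ 2)⁻¹ •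
          ((1 / (2 * ‖x - o‖)) •
            ((fderivInnerCLM ℝ (x - o, x - o)).comp
              ((ContinuousLinearMap.id ℝ E).prod (ContinuousLinearMap.id ℝ E))))) +
      (‖x - o‖ + k)⁻¹ •
        ((fderivInnerCLM ℝ (x - τ, x - τ)).comp
          ((ContinuousLinearMap.id ℝ E).prod (ContinuousLinearMap.id ℝ E))) := by
    ext w
    simp only [InnerProductSpace.toDual_apply_apply, ContinuousLinearMap.add_apply,
      ContinuousLinearMap.coe_smul', Pi.smul_apply, ContinuousLinearMap.smul_apply,
      ContinuousLinearMap.comp_apply, ContinuousLinearMap.prod_apply,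
      ContinuousLinearMap.id_apply, fderivInnerCLM_apply, inner_sub_left, inner_smul_left,
      smul_eq_mul, real_inner_comm (x - o) w, real_inner_comm (x - τ) w,
      real_inner_self_eq_norm_sq, map_smul]
    simp only [starRingEnd_apply, star_trivial]
    field_simp
    ring
  rw [hasGradientAt_iff_hasFDerivAt, hfun, hEq]
  exact hT

lemma nonvanish (τ o : E) (dc ε : ℝ) (hdc : 0 < dc) (hsep : 2 * dc < ‖o - τ‖)
    (hε : 0 < ε) (x : E) (hx : dc < ‖x - o‖) (hxτ : x ≠ τ)
    (hray : ∀ θ : ℝ, 1 ≤ θ → x ≠ τ + θ • (o - τ)) :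
    (2 * (‖x - o‖ + (1 / ε - dc))) • (x - τ) - (‖x - τ‖ ^ 2 / ‖x - o‖) • (x - o) ≠ 0 := by
  intro hN
  have hiε : 0 < 1 / ε := by positivity
  have hb0 : ‖x - o‖ ≠ 0 := by linarith
  have hbpos : 0 < ‖x - o‖ := by linarith
  have ha0 : ‖x - τ‖ ≠ 0 := by
    simpa [norm_eq_zero, sub_eq_zero] using hxτ
  have hapos : 0 < ‖x - τ‖ := lt_of_le_of_ne (norm_nonneg _) (Ne.symm ha0)
  set g : ℝ := ‖x - o‖ + (1 / ε - dc) with hgdef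
  have hgpos : 0 < g := by simp only [hgdef]; linarith
  have heq : (2 * g) • (x - τ) = (‖x - τ‖ ^ 2 / ‖x - o‖) • (x - o) :=
    sub_eq_zero.mp hN
  have hnormeq : 2 * g * ‖x - τ‖ = ‖x - τ‖ ^ 2 := by
    have := congrArg norm heq
    rw [norm_smul, norm_smul, Real.norm_eq_abs, Real.norm_eq_abs,
      abs_of_pos (by positivity), abs_of_nonneg (by positivity),
      div_mul_cancel₀ _ hb0] at this
    exact this
  have h2g : 2 * g = ‖x - τ‖ := by
    have h := hnormeq
    rw [sq] at h
    exact mul_right_cancel₀ ha0 h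
  obtain ⟨s, hsdef⟩ : ∃ s : ℝ, s = ‖x - τ‖ / ‖x - o‖ := ⟨_, rfl⟩
  have hspos : 0 < s := by rw [hsdef]; positivity
  have heq2 : x - τ = s • (x - o) := by
    apply smul_right_injective E ha0
    show ‖x - τ‖ • (x - τ) = ‖x - τ‖ • (s • (x - o))
    have hc : ‖x - τ‖ * s = ‖x - τ‖ ^ 2 / ‖x - o‖ := by
      rw [hsdef]; field_simp
    rw [smul_smul, hc]
    conv_lhs => rw [← h2g]
    exact heq
  have hbsplit : x - o = (x - τ) - (o - τ) := by abel
  have hkey : (1 - s) • (x - τ) = (-s) • (o - τ) := by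
    rw [sub_smul, one_smul]
    nth_rewrite 1 [heq2]
    rw [hbsplit, smul_sub, neg_smul]
    abel
  by_cases hs1 : s = 1
  · rw [hs1] at hkey
    simp only [sub_self, zero_smul, neg_smul, one_smul, zero_eq_neg] at hkey
    have : ‖o - τ‖ = 0 := by rw [hkey]; simp
    linarith
  · have hs1' : (1 : ℝ) - s ≠ 0 := fun h => hs1 (by linarith)
    have hs1'' : s - 1 ≠ 0 := fun h => hs1 (by linarith)
    obtain ⟨θ, hθdef⟩ : ∃ θ : ℝ, θ = s / (s - 1) := ⟨_, rfl⟩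
    have haθ : x - τ = θ • (o - τ) := by
      have h5 := congrArg (fun z => (1 - s)⁻¹ • z) hkey
      simp only [inv_smul_smul₀ hs1', smul_smul] at h5
      rw [h5]
      congr 1
      rw [hθdef]
      field_simp
      ring
    rcases lt_or_gt_of_ne hs1 with hslt | hsgt
    · have hθneg : θ < 0 := by
        rw [hθdef]
        exact div_neg_of_pos_of_neg hspos (by linarith)
      obtain ⟨L0, hL0def⟩ : ∃ L0 : ℝ, L0 = ‖o - τ‖ := ⟨_, rfl⟩
      have hL0 : 0 < L0 := by rw [hL0def]; linarith
      have hna : ‖x - τ‖ = -θ * L0 := by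
        rw [haθ, norm_smul, Real.norm_eq_abs, abs_of_neg hθneg, hL0def]
      have hbθ : x - o = (θ - 1) • (o - τ) := by
        rw [hbsplit, haθ, sub_smul, one_smul]
      have hnb : ‖x - o‖ = (1 - θ) * L0 := by
        rw [hbθ, norm_smul, Real.norm_eq_abs, abs_of_neg (by linarith : θ - 1 < 0), hL0def]
        ring
      have h2g' : 2 * ((1 - θ) * L0 + (1 / ε - dc)) = -θ * L0 := by
        rw [← hnb, ← hna, ← hgdef]
        exact h2g
      have hsep' : 2 * dc < L0 := by rw [hL0def]; exact hsep
      nlinarith [mul_pos (neg_pos.mpr hθneg) hL0]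
    · have hθ1 : 1 ≤ θ := by
        rw [hθdef, le_div_iff₀ (by linarith : (0:ℝ) < s - 1)]
        linarith
      exact hray θ hθ1 (by rw [← haθ]; abel)

end Aux


/-- Lower bound on the barrier gradient: on a compact set `D` containing `τ`,
contained in the safe region, and avoiding an `r`-neighborhood of the ray from
`τ` through `o` starting at `o`, there is `c > 0` with `‖∇B(x)‖ ≥ c‖x-τ‖`. -/
theorem stmt_9 (n : ℕ) (hn : 2 ≤ n) (τ o : EuclideanSpace ℝ (Fin n))
    (dc ε : ℝ) (hdc : 0 < dc) (hsep : 2 * dc < ‖o - τ‖) (hε : 1 / dc < ε)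
    (B : EuclideanSpace ℝ (Fin n) → ℝ)
    (hB : ∀ y, B y = ‖y - τ‖ ^ 2 / (‖y - o‖ - dc + 1 / ε))
    (r : ℝ) (hr : 0 < r)
    (D : Set (EuclideanSpace ℝ (Fin n))) (hDc : IsCompact D) (hτD : τ ∈ D)
    (hDsafe : D ⊆ {x | dc < ‖x - o‖})
    (hDray : Disjoint D {x | ∃ θ : ℝ, 1 ≤ θ ∧ ‖x - (τ + θ • (o - τ))‖ < r}) :
    ∃ c : ℝ, 0 < c ∧ ∀ x ∈ D, c * ‖x - τ‖ ≤ ‖gradient B x‖ := by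
  have hεpos : 0 < ε := lt_trans (by positivity) hε
  have hiε : 0 < 1 / ε := by positivity
  set k : ℝ := 1 / ε - dc with hkdef
  have hB' : B = fun y => ‖y - τ‖ ^ 2 / (‖y - o‖ + k) := by
    funext y
    rw [hB y]
    have : ‖y - o‖ - dc + 1 / ε = ‖y - o‖ + k := by rw [hkdef]; ring
    rw [this]
  set v : EuclideanSpace ℝ (Fin n) → EuclideanSpace ℝ (Fin n) := fun x => ((‖x - o‖ + k) ^ 2)⁻¹ •
    ((2 * (‖x - o‖ + k)) • (x - τ) - (‖x - τ‖ ^ 2 / ‖x - o‖) • (x - o)) with hvdef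
  have hgpos : ∀ x ∈ D, 0 < ‖x - o‖ + k := by
    intro x hx
    have := hDsafe hx
    simp only [Set.mem_setOf_eq] at this
    rw [hkdef]; linarith
  have hbne : ∀ x ∈ D, ‖x - o‖ ≠ 0 := by
    intro x hx
    have := hDsafe hx
    simp only [Set.mem_setOf_eq] at this
    linarith
  have hxo : ∀ x ∈ D, x ≠ o := by
    intro x hx
    have := hbne x hx
    simpa [sub_eq_zero] using this
  have hgradeq : ∀ x ∈ D, gradient B x = v x := by
    intro x hx
    rw [hB']
    exact (gradAux τ o k x (hxo x hx) (ne_of_gt (hgpos x hx))).gradient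
  have hray' : ∀ x ∈ D, ∀ θ : ℝ, 1 ≤ θ → x ≠ τ + θ • (o - τ) := by
    intro x hx θ hθ hxeq
    exact Set.disjoint_left.mp hDray hx ⟨θ, hθ, by rw [← hxeq]; simpa using hr⟩
  have hvne : ∀ x ∈ D, x ≠ τ → v x ≠ 0 := by
    intro x hx hxτ hv0
    have hc : ((‖x - o‖ + k) ^ 2)⁻¹ ≠ 0 := by
      exact inv_ne_zero (pow_ne_zero 2 (ne_of_gt (hgpos x hx)))
    have hN0 : (2 * (‖x - o‖ + k)) • (x - τ) - (‖x - τ‖ ^ 2 / ‖x - o‖) • (x - o) = 0 := by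
      rcases smul_eq_zero.mp hv0 with h | h
      · exact absurd h hc
      · exact h
    rw [hkdef] at hN0
    exact nonvanish τ o dc ε hdc hsep hεpos x (hDsafe hx) hxτ (hray' x hx) hN0
  -- continuity
  have hcno : Continuous fun x : EuclideanSpace ℝ (Fin n) => ‖x - o‖ := (continuous_id.sub continuous_const).norm
  have hcnτ : Continuous fun x : EuclideanSpace ℝ (Fin n) => ‖x - τ‖ := (continuous_id.sub continuous_const).norm
  have hvcont : ContinuousOn (fun x => ‖v x‖) D := by
    apply ContinuousOn.norm
    rw [hvdef]
    apply ContinuousOn.fun_smul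
    · exact ContinuousOn.inv₀ (((hcno.add continuous_const).pow 2).continuousOn)
        (fun x hx => pow_ne_zero 2 (ne_of_gt (hgpos x hx)))
    · apply ContinuousOn.sub
      · exact ((continuous_const.mul (hcno.add continuous_const)).smul
          (continuous_id.sub continuous_const)).continuousOn
      · exact (((hcnτ.pow 2).continuousOn.div hcno.continuousOn (hbne)).smul
          (continuous_id.sub continuous_const).continuousOn)
  -- compactness data
  obtain ⟨xG, hxG, hG⟩ := hDc.exists_isMaxOn ⟨τ, hτD⟩
    (hcno.add continuous_const).continuousOn
  set G : ℝ := ‖xG - o‖ + k with hGdef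
  have hGpos : 0 < G := hgpos xG hxG
  obtain ⟨xR, hxR, hR⟩ := hDc.exists_isMaxOn ⟨τ, hτD⟩ hcnτ.continuousOn
  set R : ℝ := ‖xR - τ‖ with hRdef
  -- near bound
  have hnear : ∀ x ∈ D, ‖x - τ‖ ≤ dc / 3 → dc / G ^ 2 * ‖x - τ‖ ≤ ‖v x‖ := by
    intro x hx hle
    have hg := hgpos x hx
    have hgG : ‖x - o‖ + k ≤ G := hG hx
    have hno : dc < ‖x - o‖ := hDsafe hx
    have htri : ‖o - τ‖ ≤ ‖x - τ‖ + ‖x - o‖ := by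
      have h1 : o - τ = (x - τ) - (x - o) := by abel
      rw [h1]
      exact norm_sub_le _ _
    have h2 : dc ≤ 2 * (‖x - o‖ + k) - ‖x - τ‖ := by
      rw [hkdef]
      linarith
    have hb0 : ‖x - o‖ ≠ 0 := hbne x hx
    have hnv : ‖v x‖ = ((‖x - o‖ + k) ^ 2)⁻¹ *
        ‖(2 * (‖x - o‖ + k)) • (x - τ) - (‖x - τ‖ ^ 2 / ‖x - o‖) • (x - o)‖ := by
      rw [hvdef]
      simp only []
      rw [norm_smul, Real.norm_eq_abs, abs_of_pos (by positivity)]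
    have hlow : 2 * (‖x - o‖ + k) * ‖x - τ‖ - ‖x - τ‖ ^ 2 ≤
        ‖(2 * (‖x - o‖ + k)) • (x - τ) - (‖x - τ‖ ^ 2 / ‖x - o‖) • (x - o)‖ := by
      have h3 := norm_sub_norm_le ((2 * (‖x - o‖ + k)) • (x - τ))
        ((‖x - τ‖ ^ 2 / ‖x - o‖) • (x - o))
      rw [norm_smul, norm_smul, Real.norm_eq_abs, Real.norm_eq_abs,
        abs_of_pos (by positivity), abs_of_nonneg (by positivity),
        div_mul_cancel₀ _ hb0] at h3
      exact h3
    rw [hnv]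
    have hstep : (G ^ 2)⁻¹ * (dc * ‖x - τ‖) ≤
        ((‖x - o‖ + k) ^ 2)⁻¹ * (2 * (‖x - o‖ + k) * ‖x - τ‖ - ‖x - τ‖ ^ 2) := by
      apply mul_le_mul
      · exact inv_anti₀ (by positivity) (pow_le_pow_left₀ hg.le hgG 2)
      · nlinarith [norm_nonneg (x - τ)]
      · positivity
      · positivity
    have hfin : ((‖x - o‖ + k) ^ 2)⁻¹ * (2 * (‖x - o‖ + k) * ‖x - τ‖ - ‖x - τ‖ ^ 2) ≤
        ((‖x - o‖ + k) ^ 2)⁻¹ *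
        ‖(2 * (‖x - o‖ + k)) • (x - τ) - (‖x - τ‖ ^ 2 / ‖x - o‖) • (x - o)‖ :=
      mul_le_mul_of_nonneg_left hlow (by positivity)
    calc dc / G ^ 2 * ‖x - τ‖ = (G ^ 2)⁻¹ * (dc * ‖x - τ‖) := by ring
      _ ≤ _ := le_trans hstep hfin
  -- case split on whether the far region is empty
  have hclosed : IsClosed {x : EuclideanSpace ℝ (Fin n) | dc / 3 ≤ ‖x - τ‖} := isClosed_le continuous_const hcnτ
  set K : Set (EuclideanSpace ℝ (Fin n)) := D ∩ {x : EuclideanSpace ℝ (Fin n) | dc / 3 ≤ ‖x - τ‖} with hKdef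
  have hKc : IsCompact K := hDc.inter_right hclosed
  by_cases hK : K.Nonempty
  · obtain ⟨x₀, hx₀, hmin⟩ := hKc.exists_isMinOn hK (hvcont.mono Set.inter_subset_left)
    have hx₀D : x₀ ∈ D := hx₀.1
    have hx₀τ : x₀ ≠ τ := by
      intro h
      have := hx₀.2
      rw [h] at this
      simp only [Set.mem_setOf_eq, sub_self, norm_zero] at this
      linarith
    have hmpos : 0 < ‖v x₀‖ := norm_pos_iff.mpr (hvne x₀ hx₀D hx₀τ)
    have hRpos : 0 < R := by
      have h1 : dc / 3 ≤ ‖x₀ - τ‖ := hx₀.2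
      have h2 : ‖x₀ - τ‖ ≤ R := hR hx₀D
      linarith
    refine ⟨min (dc / G ^ 2) (‖v x₀‖ / R), lt_min (by positivity) (by positivity), ?_⟩
    intro x hx
    rw [hgradeq x hx]
    by_cases hcase : ‖x - τ‖ ≤ dc / 3
    · calc min (dc / G ^ 2) (‖v x₀‖ / R) * ‖x - τ‖ ≤ dc / G ^ 2 * ‖x - τ‖ :=
          mul_le_mul_of_nonneg_right (min_le_left _ _) (norm_nonneg _)
        _ ≤ ‖v x‖ := hnear x hx hcase
    · have hxK : x ∈ K := ⟨hx, le_of_lt (lt_of_not_ge hcase)⟩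
      have h1 : min (dc / G ^ 2) (‖v x₀‖ / R) * ‖x - τ‖ ≤ (‖v x₀‖ / R) * R := by
        apply mul_le_mul (min_le_right _ _) (hR hx) (norm_nonneg _) (by positivity)
      rw [div_mul_cancel₀ _ (ne_of_gt hRpos)] at h1
      exact le_trans h1 (hmin hxK)
  · refine ⟨dc / G ^ 2, by positivity, ?_⟩
    intro x hx
    have hcase : ‖x - τ‖ ≤ dc / 3 := by
      by_contra h
      exact hK ⟨x, hx, le_of_lt (lt_of_not_ge h)⟩
    rw [hgradeq x hx]
    exact hnear x hx hcase
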